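/- arXiv:2509.18858 — 2 statements merged into one kernel-verified Lean document; each statement's English description precedes it below -/
import Mathlib

section
/- The tensor product K_n × P_2 (n ≥ 3), with adjacency matrix A_{K_n} ⊗ A_{P_2}, has Laplacian perfect pair state transfer at time π/2: there is a unit complex number χ such that U_{L_{K_n × P_2}}(π/2)((e_a − e_b) ⊗ e_1) = χ (e_a − e_b) ⊗ e_0 for any two distinct vertices a, b of K_n, where e_0, e_1 index the two vertices of the path P_2. -/
open Matrix Complex Kronecker

/-- transition matrix `U_M(t) = exp(-itM)` -/
noncomputable def U {V : Type*} [Fintype V] [DecidableEq V] (M : Matrix V V ℂ) (t : ℝ) :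
    Matrix V V ℂ :=
  NormedSpace.exp ((-(Complex.I * (t : ℂ))) • M)

/-- standard basis vector -/
noncomputable def e {V : Type*} [DecidableEq V] (v : V) : V → ℂ := Pi.single v 1

/-- Kronecker product of vectors -/
def vecKron {α β : Type*} (u : α → ℂ) (v : β → ℂ) : α × β → ℂ := fun p => u p.1 * v p.2
/-- adjacency matrix of the path P₂ on vertices {0, 1} -/
def AP2 : Matrix (Fin 2) (Fin 2) ℂ := !![0, 1; 1, 0]

lemma exp_mulVec_eigen {V : Type*} [Fintype V] [DecidableEq V]
    (M : Matrix V V ℂ) (x : V → ℂ) (μ : ℂ) (h : M *ᵥ x = μ • x) :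
    (NormedSpace.exp M) *ᵥ x = Complex.exp μ • x := by
  letI : NormedRing (Matrix V V ℂ) := Matrix.linftyOpNormedRing
  letI : NormedAlgebra ℂ (Matrix V V ℂ) := Matrix.linftyOpNormedAlgebra
  have hpow : ∀ k : ℕ, (M ^ k) *ᵥ x = (μ ^ k) • x := by
    intro k
    induction k with
    | zero => simp
    | succ k ih =>
      rw [pow_succ, ← Matrix.mulVec_mulVec, h, Matrix.mulVec_smul, ih, smul_smul,
        pow_succ, mul_comm]
  let φ : Matrix V V ℂ →ₗ[ℂ] (V → ℂ) :=
    { toFun := fun N => N *ᵥ x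
      map_add' := fun N1 N2 => Matrix.add_mulVec N1 N2 x
      map_smul' := fun c N => Matrix.smul_mulVec c N x }
  let φ' := LinearMap.toContinuousLinearMap φ
  have h1 : HasSum (fun k : ℕ => ((k.factorial)⁻¹ : ℂ) • M ^ k) (NormedSpace.exp M) :=
    NormedSpace.exp_series_hasSum_exp' M
  have h2 := h1.mapL φ'
  have h3 : (fun k : ℕ => φ' (((k.factorial)⁻¹ : ℂ) • M ^ k))
      = fun k : ℕ => (((k.factorial)⁻¹ : ℂ) • μ ^ k) • x := by
    funext k
    rw [_root_.map_smul]
    show ((k.factorial)⁻¹ : ℂ) • ((M ^ k) *ᵥ x) = _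
    rw [hpow k]
    simp [smul_smul]
  rw [h3] at h2
  have h4 : HasSum (fun k : ℕ => ((k.factorial)⁻¹ : ℂ) • μ ^ k) (Complex.exp μ) := by
    rw [Complex.exp_eq_exp_ℂ]
    exact NormedSpace.exp_series_hasSum_exp' μ
  have h5 := h4.smul_const x
  exact h2.unique h5

lemma kron_mulVec {α β : Type*} [Fintype α] [Fintype β]
    (A : Matrix α α ℂ) (B : Matrix β β ℂ) (u : α → ℂ) (v : β → ℂ) :
    (A ⊗ₖ B) *ᵥ vecKron u v = vecKron (A *ᵥ u) (B *ᵥ v) := by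
  funext p
  simp only [Matrix.mulVec, dotProduct, vecKron, Matrix.kroneckerMap_apply,
    Fintype.sum_prod_type]
  rw [Finset.sum_mul_sum]
  refine Finset.sum_congr rfl fun k _ => Finset.sum_congr rfl fun l _ => by ring

lemma top_adj_mulVec {n : ℕ} (u : Fin n → ℂ) (hu : ∑ j, u j = 0) :
    ((⊤ : SimpleGraph (Fin n)).adjMatrix ℂ) *ᵥ u = -u := by
  funext i
  rw [SimpleGraph.adjMatrix_mulVec_apply]
  have hnb : (⊤ : SimpleGraph (Fin n)).neighborFinset i = Finset.univ.erase i := by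
    ext j
    simp [SimpleGraph.mem_neighborFinset, Finset.mem_erase, ne_comm, eq_comm]
  rw [hnb, Finset.sum_erase_eq_sub (Finset.mem_univ i), hu]
  simp

lemma vecKron_neg_left {α β : Type*} (u : α → ℂ) (v : β → ℂ) :
    vecKron (-u) v = -vecKron u v := by
  funext p; simp [vecKron]

theorem stmt10 (n : ℕ) (hn : 3 ≤ n) (a b : Fin n) (hab : a ≠ b) :
    ∃ χ : ℂ, ‖χ‖ = 1 ∧
      (U ((((n - 1) * 1 : ℕ) : ℂ) • (1 : Matrix (Fin n × Fin 2) (Fin n × Fin 2) ℂ)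
            - ((⊤ : SimpleGraph (Fin n)).adjMatrix ℂ) ⊗ₖ AP2) (Real.pi / 2)) *ᵥ
          vecKron (e a - e b) (e (1 : Fin 2))
        = χ • vecKron (e a - e b) (e (0 : Fin 2)) := by
  classical
  set u : Fin n → ℂ := e a - e b with hu_def
  set v : Fin n × Fin 2 → ℂ := vecKron u (e (1 : Fin 2)) with hv_def
  set w : Fin n × Fin 2 → ℂ := vecKron u (e (0 : Fin 2)) with hw_def
  set c : ℂ := (((n - 1) * 1 : ℕ) : ℂ) with hc_def
  set L : Matrix (Fin n × Fin 2) (Fin n × Fin 2) ℂ :=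
    c • (1 : Matrix (Fin n × Fin 2) (Fin n × Fin 2) ℂ)
      - ((⊤ : SimpleGraph (Fin n)).adjMatrix ℂ) ⊗ₖ AP2 with hL_def
  have hsum : ∑ j, u j = 0 := by
    simp [hu_def, e, Finset.sum_sub_distrib, Finset.sum_pi_single]
  have hAu : ((⊤ : SimpleGraph (Fin n)).adjMatrix ℂ) *ᵥ u = -u := top_adj_mulVec u hsum
  have hX1 : AP2 *ᵥ e (1 : Fin 2) = e (0 : Fin 2) := by
    funext j
    fin_cases j <;>
      simp [AP2, Matrix.mulVec, dotProduct, e, Fin.sum_univ_two, Pi.single]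
  have hX0 : AP2 *ᵥ e (0 : Fin 2) = e (1 : Fin 2) := by
    funext j
    fin_cases j <;>
      simp [AP2, Matrix.mulVec, dotProduct, e, Fin.sum_univ_two, Pi.single]
  have hLv : L *ᵥ v = c • v + w := by
    rw [hL_def, Matrix.sub_mulVec, Matrix.smul_mulVec, Matrix.one_mulVec,
      hv_def, kron_mulVec, hAu, hX1, vecKron_neg_left]
    abel
  have hLw : L *ᵥ w = c • w + v := by
    rw [hL_def, Matrix.sub_mulVec, Matrix.smul_mulVec, Matrix.one_mulVec,
      hw_def, kron_mulVec, hAu, hX0, vecKron_neg_left]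
    abel
  set s : ℂ := -(Complex.I * ((Real.pi / 2 : ℝ) : ℂ)) with hs_def
  have hMvw : (s • L) *ᵥ (v + w) = (s * (c + 1)) • (v + w) := by
    rw [Matrix.smul_mulVec, Matrix.mulVec_add, hLv, hLw, ← smul_smul]
    module
  have hMvw' : (s • L) *ᵥ (v - w) = (s * (c - 1)) • (v - w) := by
    rw [Matrix.smul_mulVec, Matrix.mulVec_sub, hLv, hLw, ← smul_smul]
    module
  have hexp1 : (NormedSpace.exp (s • L)) *ᵥ (v + w)
      = Complex.exp (s * (c + 1)) • (v + w) := exp_mulVec_eigen _ _ _ hMvw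
  have hexp2 : (NormedSpace.exp (s • L)) *ᵥ (v - w)
      = Complex.exp (s * (c - 1)) • (v - w) := exp_mulVec_eigen _ _ _ hMvw'
  -- relation between the two eigen-phases
  have hphase : Complex.exp (s * (c - 1)) = -Complex.exp (s * (c + 1)) := by
    have : s * (c - 1) = s * (c + 1) + Real.pi * Complex.I := by
      rw [hs_def]
      push_cast
      ring
    rw [this, Complex.exp_add, Complex.exp_pi_mul_I]
    ring
  refine ⟨Complex.exp (s * (c + 1)), ?_, ?_⟩
  · rw [Complex.norm_exp]
    have : (s * (c + 1)).re = 0 := by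
      rw [hs_def, hc_def]
      simp [Complex.mul_re, Complex.mul_im]
    rw [this, Real.exp_zero]
  · have hv2 : v = (2⁻¹ : ℂ) • ((v + w) + (v - w)) := by module
    have : (U L (Real.pi / 2)) *ᵥ v
        = (2⁻¹ : ℂ) • ((NormedSpace.exp (s • L)) *ᵥ (v + w)
            + (NormedSpace.exp (s • L)) *ᵥ (v - w)) := by
      rw [U, ← hs_def, ← Matrix.mulVec_add]
      conv_lhs => rw [hv2]
      rw [Matrix.mulVec_smul]
    rw [this, hexp1, hexp2, hphase]
    show _ = Complex.exp (s * (c + 1)) • w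
    module
end

section
/- Let G be r₁-regular and H be r₂-regular on the same n-vertex set. The double cover G ⋉ H has Laplacian perfect pair state transfer between e_i ⊗ (e_a − e_b) and e_i ⊗ (e_c − e_d) (for i = 0 or 1) at time τ if and only if there exists a unit complex number χ such that (e_a − e_b)^⊤ U_{A_G+A_H}(τ)(e_c − e_d) = 2χ and (e_a − e_b)^⊤ U_{A_G−A_H}(τ)(e_c − e_d) = 2χ, i.e., both A_G+A_H and A_G−A_H have perfect pair state transfer between e_a − e_b and e_c − e_d with the same phase χ. -/
open Matrix Complex Kronecker

open NormedSpace

section Aux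
variable {n : ℕ}

noncomputable def bsum (n : ℕ) : (Fin n × Bool) ≃ (Fin n ⊕ Fin n) :=
  (Equiv.prodComm _ _).trans (Equiv.boolProdEquivSum _)

theorem exp_fromBlocks_diag (X Y : Matrix (Fin n) (Fin n) ℂ) :
    exp (Matrix.fromBlocks X 0 0 Y) = Matrix.fromBlocks (exp X) 0 0 (exp Y) := by
  letI : SeminormedRing (Matrix (Fin n) (Fin n) ℂ) := Matrix.linftyOpSemiNormedRing
  letI : NormedRing (Matrix (Fin n) (Fin n) ℂ) := Matrix.linftyOpNormedRing
  letI : NormedAlgebra ℂ (Matrix (Fin n) (Fin n) ℂ) := Matrix.linftyOpNormedAlgebra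
  letI : NormedRing (Matrix (Fin n ⊕ Fin n) (Fin n ⊕ Fin n) ℂ) := Matrix.linftyOpNormedRing
  letI : NormedAlgebra ℂ (Matrix (Fin n ⊕ Fin n) (Fin n ⊕ Fin n) ℂ) := Matrix.linftyOpNormedAlgebra
  letI : NormedRing (Matrix (Fin n × Bool) (Fin n × Bool) ℂ) := Matrix.linftyOpNormedRing
  letI : NormedAlgebra ℂ (Matrix (Fin n × Bool) (Fin n × Bool) ℂ) := Matrix.linftyOpNormedAlgebra
  letI : NormedAlgebra ℚ (Matrix (Fin n × Bool) (Fin n × Bool) ℂ) := Matrix.linftyOpNormedAlgebra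
  letI : NormedAlgebra ℚ (Matrix (Fin n ⊕ Fin n) (Fin n ⊕ Fin n) ℂ) := Matrix.linftyOpNormedAlgebra
  letI : NormedAlgebra ℚ (Matrix (Fin n) (Fin n) ℂ) := Matrix.linftyOpNormedAlgebra
  have key : ∀ Z W : Matrix (Fin n) (Fin n) ℂ,
      (Matrix.reindexAlgEquiv (R := ℂ) (A := ℂ) (bsum n))
        (Matrix.blockDiagonal (fun b => bif b then W else Z)) = Matrix.fromBlocks Z 0 0 W := by
    intro Z W
    ext i j
    rcases i with i | i <;> rcases j with j | j <;>
      simp [Matrix.reindexAlgEquiv_apply, Matrix.reindex_apply, bsum,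
        Matrix.blockDiagonal_apply, Matrix.submatrix_apply]
  calc exp (Matrix.fromBlocks X 0 0 Y)
      = exp ((Matrix.reindexAlgEquiv (R := ℂ) (A := ℂ) (bsum n))
          (Matrix.blockDiagonal (fun b => bif b then Y else X))) := by rw [key]
    _ = (Matrix.reindexAlgEquiv (R := ℂ) (A := ℂ) (bsum n))
          (exp (Matrix.blockDiagonal (fun b => bif b then Y else X))) :=
        (map_exp (Matrix.reindexAlgEquiv (R := ℂ) (A := ℂ) (bsum n))
          (LinearMap.continuous_of_finiteDimensional
            ((Matrix.reindexAlgEquiv (R := ℂ) (A := ℂ) (bsum n)).toLinearMap)) _).symm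
    _ = Matrix.fromBlocks (exp X) 0 0 (exp Y) := by
        rw [Matrix.exp_blockDiagonal]
        have h2 : (exp (fun b => bif b then Y else X) : Bool → Matrix (Fin n) (Fin n) ℂ)
            = fun b => bif b then exp Y else exp X := by
          funext b; erw [Pi.coe_exp]; cases b <;> rfl
        rw [h2, ← key (exp X) (exp Y)]

theorem exp_smul_one (m : Type*) [Fintype m] [DecidableEq m] (c : ℂ) :
    exp (c • (1 : Matrix m m ℂ)) = Complex.exp c • (1 : Matrix m m ℂ) := by
  letI : NormedRing (Matrix m m ℂ) := Matrix.linftyOpNormedRing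
  letI : NormedAlgebra ℂ (Matrix m m ℂ) := Matrix.linftyOpNormedAlgebra
  have h1 : (c • (1 : Matrix m m ℂ)) = algebraMap ℂ (Matrix m m ℂ) c := by
    rw [Algebra.algebraMap_eq_smul_one]
  letI : NormedAlgebra ℚ (Matrix m m ℂ) := Matrix.linftyOpNormedAlgebra
  rw [h1]; erw [← algebraMap_exp_comm]; rw [Complex.exp_eq_exp_ℂ, Algebra.algebraMap_eq_smul_one]

theorem exp_smul_fromBlocks (A B : Matrix (Fin n) (Fin n) ℂ) (c : ℂ) :
    exp (c • Matrix.fromBlocks A B B A)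
    = (2⁻¹ : ℂ) • Matrix.fromBlocks
        (exp (c • (A + B)) + exp (c • (A - B)))
        (exp (c • (A + B)) - exp (c • (A - B)))
        (exp (c • (A + B)) - exp (c • (A - B)))
        (exp (c • (A + B)) + exp (c • (A - B))) := by
  set T : Matrix (Fin n ⊕ Fin n) (Fin n ⊕ Fin n) ℂ := Matrix.fromBlocks 1 1 1 (-1) with hT
  have hTT : T * T = (2 : ℂ) • (1 : Matrix (Fin n ⊕ Fin n) (Fin n ⊕ Fin n) ℂ) := by
    rw [hT]
    rw [Matrix.fromBlocks_multiply, ← Matrix.fromBlocks_one, Matrix.fromBlocks_smul]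
    congr 1 <;> simp <;> module
  have hinv : T * ((2⁻¹ : ℂ) • T) = 1 := by
    rw [Matrix.mul_smul, hTT, smul_smul]; norm_num
  have hinv' : ((2⁻¹ : ℂ) • T) * T = 1 := by
    rw [Matrix.smul_mul, hTT, smul_smul]; norm_num
  set Tu : (Matrix (Fin n ⊕ Fin n) (Fin n ⊕ Fin n) ℂ)ˣ := ⟨T, (2⁻¹ : ℂ) • T, hinv, hinv'⟩ with hTu
  set D : Matrix (Fin n ⊕ Fin n) (Fin n ⊕ Fin n) ℂ :=
    Matrix.fromBlocks (c • (A + B)) 0 0 (c • (A - B)) with hD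
  have hconj : (Tu : Matrix _ _ ℂ) * D * (↑Tu⁻¹ : Matrix _ _ ℂ) = c • Matrix.fromBlocks A B B A := by
    show T * D * ((2⁻¹ : ℂ) • T) = _
    rw [hD, hT, Matrix.fromBlocks_multiply, Matrix.mul_smul, Matrix.fromBlocks_multiply]
    rw [Matrix.fromBlocks_smul, Matrix.fromBlocks_smul]
    simp
    and_intros <;> module
  have := Matrix.exp_units_conj Tu D
  rw [hconj] at this
  rw [this]
  show T * exp D * ((2⁻¹ : ℂ) • T) = _
  rw [hD, exp_fromBlocks_diag, hT, Matrix.fromBlocks_multiply, Matrix.mul_smul,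
    Matrix.fromBlocks_multiply, Matrix.fromBlocks_smul, Matrix.fromBlocks_smul]
  simp
  and_intros <;> module

theorem U_L (A B : Matrix (Fin n) (Fin n) ℂ) (s : ℂ) (t : ℝ) :
    U (s • (1 : Matrix (Fin n ⊕ Fin n) (Fin n ⊕ Fin n) ℂ) - Matrix.fromBlocks A B B A) t
      = (Complex.exp (-(Complex.I * t) * s) * 2⁻¹) •
          Matrix.fromBlocks
            (exp ((Complex.I * t) • (A + B)) + exp ((Complex.I * t) • (A - B)))
            (exp ((Complex.I * t) • (A + B)) - exp ((Complex.I * t) • (A - B)))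
            (exp ((Complex.I * t) • (A + B)) - exp ((Complex.I * t) • (A - B)))
            (exp ((Complex.I * t) • (A + B)) + exp ((Complex.I * t) • (A - B))) := by
  have h1 : (-(Complex.I * (t : ℂ))) • (s • (1 : Matrix (Fin n ⊕ Fin n) (Fin n ⊕ Fin n) ℂ)
      - Matrix.fromBlocks A B B A)
      = (-(Complex.I * t) * s) • (1 : Matrix (Fin n ⊕ Fin n) (Fin n ⊕ Fin n) ℂ)
        + (Complex.I * t) • Matrix.fromBlocks A B B A := by
    rw [smul_sub, smul_smul]; module
  have hcomm : Commute ((-(Complex.I * t) * s) • (1 : Matrix (Fin n ⊕ Fin n) (Fin n ⊕ Fin n) ℂ))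
      ((Complex.I * t) • Matrix.fromBlocks A B B A) :=
    ((Commute.one_left _).smul_left _).smul_right _
  rw [U, h1, Matrix.exp_add_of_commute _ _ hcomm, exp_smul_one, exp_smul_fromBlocks,
    smul_mul_assoc, Matrix.one_mul, smul_smul]

theorem dot_block_inl (w v : Fin n → ℂ) (z : ℂ) (P Q : Matrix (Fin n) (Fin n) ℂ) :
    Sum.elim w (0 : Fin n → ℂ) ⬝ᵥ ((z • Matrix.fromBlocks P Q Q P) *ᵥ Sum.elim v (0 : Fin n → ℂ))
      = z * (w ⬝ᵥ (P *ᵥ v)) := by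
  rw [Matrix.smul_mulVec, Matrix.fromBlocks_mulVec]
  simp [sumElim_dotProduct_sumElim, dotProduct_smul, smul_eq_mul]

theorem dot_block_inr (w v : Fin n → ℂ) (z : ℂ) (P Q : Matrix (Fin n) (Fin n) ℂ) :
    Sum.elim (0 : Fin n → ℂ) w ⬝ᵥ ((z • Matrix.fromBlocks P Q Q P) *ᵥ Sum.elim (0 : Fin n → ℂ) v)
      = z * (w ⬝ᵥ (P *ᵥ v)) := by
  rw [Matrix.smul_mulVec, Matrix.fromBlocks_mulVec]
  simp [sumElim_dotProduct_sumElim, dotProduct_smul, smul_eq_mul]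

theorem dot_conj_transfer (N : Matrix (Fin n) (Fin n) ℂ) (hN : N.IsHermitian) (t : ℝ)
    (w v : Fin n → ℂ) (hw : star w = w) (hv : star v = v) :
    w ⬝ᵥ ((exp ((Complex.I * t) • N)) *ᵥ v)
      = starRingEnd ℂ (v ⬝ᵥ (U N t *ᵥ w)) := by
  have hstar : (U N t)ᴴ = exp ((Complex.I * t) • N) := by
    rw [U, ← Matrix.exp_conjTranspose, Matrix.conjTranspose_smul, hN.eq]
    congr 1
    simp [Complex.star_def]
  have h0 : (starRingEnd ℂ) (v ⬝ᵥ (U N t *ᵥ w)) = star (v ⬝ᵥ (U N t *ᵥ w)) := rfl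
  rw [h0, ← Matrix.star_dotProduct_star, Matrix.star_mulVec, hv, hstar, hw,
    ← Matrix.dotProduct_mulVec]

theorem star_dot_self (u : Fin n → ℂ) : star u ⬝ᵥ u = ((∑ i, ‖u i‖ ^ 2 : ℝ) : ℂ) := by
  push_cast
  simp only [dotProduct, Pi.star_apply]
  congr 1
  funext i
  rw [Complex.star_def, mul_comm, Complex.mul_conj]
  rw [Complex.normSq_eq_norm_sq]
  norm_cast

theorem U_unitary (N : Matrix (Fin n) (Fin n) ℂ) (hN : N.IsHermitian) (t : ℝ) :
    (U N t)ᴴ * U N t = 1 := by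
  have hstar : (U N t)ᴴ = exp ((Complex.I * t) • N) := by
    rw [U, ← Matrix.exp_conjTranspose, Matrix.conjTranspose_smul, hN.eq]
    congr 1
    simp [Complex.star_def]
  rw [hstar, U]
  have hc : Commute ((Complex.I * t) • N) ((-(Complex.I * t)) • N) :=
    ((Commute.refl N).smul_left _).smul_right _
  rw [← Matrix.exp_add_of_commute _ _ hc]
  have : (Complex.I * t) • N + (-(Complex.I * t)) • N = 0 := by module
  rw [this, NormedSpace.exp_zero]

theorem mulVec_norm_preserved (M : Matrix (Fin n) (Fin n) ℂ) (hM : Mᴴ * M = 1)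
    (x : Fin n → ℂ) : ∑ i, ‖(M *ᵥ x) i‖ ^ 2 = ∑ i, ‖x i‖ ^ 2 := by
  have h : star (M *ᵥ x) ⬝ᵥ (M *ᵥ x) = star x ⬝ᵥ x := by
    rw [Matrix.star_mulVec, Matrix.dotProduct_mulVec, Matrix.vecMul_vecMul, hM,
      Matrix.vecMul_one]
  rw [star_dot_self, star_dot_self] at h
  exact_mod_cast h

theorem cs_bound (u y : Fin n → ℂ) :
    ‖u ⬝ᵥ y‖ ≤ Real.sqrt (∑ i, ‖u i‖ ^ 2) * Real.sqrt (∑ i, ‖y i‖ ^ 2) := by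
  set uE : EuclideanSpace ℂ (Fin n) := (WithLp.equiv 2 (Fin n → ℂ)).symm (star u)
  set yE : EuclideanSpace ℂ (Fin n) := (WithLp.equiv 2 (Fin n → ℂ)).symm y
  have hinner : (inner ℂ uE yE : ℂ) = u ⬝ᵥ y := by
    simp only [PiLp.inner_apply, RCLike.inner_apply, uE, yE, dotProduct]
    congr 1
    funext i
    simp [mul_comm]
  calc ‖u ⬝ᵥ y‖ = ‖(inner ℂ uE yE : ℂ)‖ := by rw [hinner]
    _ ≤ ‖uE‖ * ‖yE‖ := norm_inner_le_norm _ _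
    _ = Real.sqrt (∑ i, ‖u i‖ ^ 2) * Real.sqrt (∑ i, ‖y i‖ ^ 2) := by
        rw [EuclideanSpace.norm_eq, EuclideanSpace.norm_eq]
        congr 2
        · apply Finset.sum_congr rfl
          intro i _
          simp [uE]


theorem star_e_sub (a b : Fin n) : star (e a - e b : Fin n → ℂ) = e a - e b := by
  funext i
  simp only [Pi.star_apply, Pi.sub_apply, e, Pi.single_apply]
  rcases eq_or_ne i a with h | h <;> rcases eq_or_ne i b with h' | h' <;>
    simp [h, h', Complex.star_def]

theorem norm_sum_e_sub {a b : Fin n} (hab : a ≠ b) :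
    ∑ i, ‖(e a - e b : Fin n → ℂ) i‖ ^ 2 = 2 := by
  have h : ∀ i : Fin n, ‖(e a - e b : Fin n → ℂ) i‖ ^ 2
      = (if i = a then 1 else 0) + (if i = b then 1 else 0) := by
    intro i
    simp only [Pi.sub_apply, e, Pi.single_apply]
    rcases eq_or_ne i a with h | h <;> rcases eq_or_ne i b with h' | h' <;>
      simp_all [h, h']
  rw [Finset.sum_congr rfl (fun i _ => h i), Finset.sum_add_distrib]
  simp
  norm_num

theorem dot_U_bound (N : Matrix (Fin n) (Fin n) ℂ) (hN : N.IsHermitian) (t : ℝ)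
    {a b c d : Fin n} (hab : a ≠ b) (hcd : c ≠ d) :
    ‖(e a - e b : Fin n → ℂ) ⬝ᵥ (U N t *ᵥ (e c - e d : Fin n → ℂ))‖ ≤ 2 := by
  have h1 := cs_bound (e a - e b : Fin n → ℂ) (U N t *ᵥ (e c - e d : Fin n → ℂ))
  rw [mulVec_norm_preserved (U N t) (U_unitary N hN t), norm_sum_e_sub hab,
    norm_sum_e_sub hcd] at h1
  calc ‖_‖ ≤ Real.sqrt 2 * Real.sqrt 2 := h1
    _ = 2 := by rw [← Real.sqrt_mul_self (by norm_num : (0:ℝ) ≤ 2)]; norm_num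

theorem final_abs (z p q : ℂ) (hz : ‖z‖ = 4⁻¹)
    (hp : ‖p‖ ≤ 2) (hq : ‖q‖ ≤ 2) :
    (‖z * (starRingEnd ℂ p + starRingEnd ℂ q)‖) ^ 2 = 1
      ↔ ∃ χ : ℂ, ‖χ‖ = 1 ∧ p = 2 * χ ∧ q = 2 * χ := by
  have habs : ‖z * (starRingEnd ℂ p + starRingEnd ℂ q)‖
      = 4⁻¹ * ‖p + q‖ := by
    rw [norm_mul, hz, ← _root_.map_add, RCLike.norm_conj]
  rw [habs]
  constructor
  · intro h
    have hpq : ‖p + q‖ = 4 := by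
      have h0 := norm_nonneg (p + q)
      nlinarith [h]
    have htri : ‖p + q‖ ≤ ‖p‖ + ‖q‖ := norm_add_le _ _
    have hp2 : ‖p‖ = 2 := by linarith [hpq ▸ htri]
    have hq2 : ‖q‖ = 2 := by linarith [hpq ▸ htri]
    have hpq' : ‖p + q‖ = ‖p‖ + ‖q‖ := by
      simp only [hpq, hp2, hq2]; norm_num
    have hpq'' : p = q := eq_of_norm_eq_of_norm_add_eq
      (by rw [hp2, hq2]) hpq'
    refine ⟨p / 2, ?_, by ring, by rw [← hpq'']; ring⟩
    rw [norm_div, hp2]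
    norm_num
  · rintro ⟨χ, hχ, rfl, rfl⟩
    have : 2 * χ + 2 * χ = 4 * χ := by ring
    rw [this, norm_mul, hχ]
    norm_num

theorem adjMatrix_isHermitian (G : SimpleGraph (Fin n)) [DecidableRel G.Adj] :
    (G.adjMatrix ℂ).IsHermitian := by
  ext i j
  simp [Matrix.conjTranspose_apply, SimpleGraph.adjMatrix_apply, SimpleGraph.adj_comm,
    apply_ite (starRingEnd ℂ)]


end Aux

theorem stmt17 {n r₁ r₂ : ℕ} (G H : SimpleGraph (Fin n))
    [DecidableRel G.Adj] [DecidableRel H.Adj]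
    (hG : G.IsRegularOfDegree r₁) (hH : H.IsRegularOfDegree r₂)
    (τ : ℝ) (a b c d : Fin n) (hab : a ≠ b) (hcd : c ≠ d) :
    -- i = 0 : between e₀ ⊗ (e_a - e_b) and e₀ ⊗ (e_c - e_d)
    (‖((1 / 2 : ℂ) *
        (Sum.elim ((e c - e d : Fin n → ℂ)) (0 : Fin n → ℂ) ⬝ᵥ
          ((U (((r₁ + r₂ : ℕ) : ℂ) • (1 : Matrix (Fin n ⊕ Fin n) (Fin n ⊕ Fin n) ℂ)
                - Matrix.fromBlocks (G.adjMatrix ℂ) (H.adjMatrix ℂ)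
                    (H.adjMatrix ℂ) (G.adjMatrix ℂ)) τ) *ᵥ
            Sum.elim ((e a - e b : Fin n → ℂ)) (0 : Fin n → ℂ))))‖ ^ 2 = 1
      ↔ ∃ χ : ℂ, ‖χ‖ = 1 ∧
          (e a - e b) ⬝ᵥ ((U (G.adjMatrix ℂ + H.adjMatrix ℂ) τ) *ᵥ (e c - e d)) = 2 * χ ∧
          (e a - e b) ⬝ᵥ ((U (G.adjMatrix ℂ - H.adjMatrix ℂ) τ) *ᵥ (e c - e d)) = 2 * χ)
    ∧
    -- i = 1 : between e₁ ⊗ (e_a - e_b) and e₁ ⊗ (e_c - e_d)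
    (‖((1 / 2 : ℂ) *
        (Sum.elim (0 : Fin n → ℂ) ((e c - e d : Fin n → ℂ)) ⬝ᵥ
          ((U (((r₁ + r₂ : ℕ) : ℂ) • (1 : Matrix (Fin n ⊕ Fin n) (Fin n ⊕ Fin n) ℂ)
                - Matrix.fromBlocks (G.adjMatrix ℂ) (H.adjMatrix ℂ)
                    (H.adjMatrix ℂ) (G.adjMatrix ℂ)) τ) *ᵥ
            Sum.elim (0 : Fin n → ℂ) ((e a - e b : Fin n → ℂ)))))‖ ^ 2 = 1
      ↔ ∃ χ : ℂ, ‖χ‖ = 1 ∧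
          (e a - e b) ⬝ᵥ ((U (G.adjMatrix ℂ + H.adjMatrix ℂ) τ) *ᵥ (e c - e d)) = 2 * χ ∧
          (e a - e b) ⬝ᵥ ((U (G.adjMatrix ℂ - H.adjMatrix ℂ) τ) *ᵥ (e c - e d)) = 2 * χ) := by
  have hA : (G.adjMatrix ℂ + H.adjMatrix ℂ).IsHermitian :=
    (adjMatrix_isHermitian G).add (adjMatrix_isHermitian H)
  have hB : (G.adjMatrix ℂ - H.adjMatrix ℂ).IsHermitian :=
    (adjMatrix_isHermitian G).sub (adjMatrix_isHermitian H)
  set w : Fin n → ℂ := e c - e d with hw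
  set v : Fin n → ℂ := e a - e b with hv
  set q₁ : ℂ := v ⬝ᵥ (U (G.adjMatrix ℂ + H.adjMatrix ℂ) τ *ᵥ w) with hq₁
  set q₂ : ℂ := v ⬝ᵥ (U (G.adjMatrix ℂ - H.adjMatrix ℂ) τ *ᵥ w) with hq₂
  set s : ℂ := ((r₁ + r₂ : ℕ) : ℂ) with hs
  have hzabs : ‖(Complex.exp (-(Complex.I * τ) * s) * 2⁻¹ * (1/2 : ℂ))‖ = 4⁻¹ := by
    rw [norm_mul, norm_mul, Complex.norm_exp]
    have : (-(Complex.I * τ) * s).re = 0 := by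
      simp [hs, Complex.mul_re]
    rw [this, Real.exp_zero]
    simp
    norm_num
  have hdot : w ⬝ᵥ ((NormedSpace.exp ((Complex.I * τ) • (G.adjMatrix ℂ + H.adjMatrix ℂ))
        + NormedSpace.exp ((Complex.I * τ) • (G.adjMatrix ℂ - H.adjMatrix ℂ))) *ᵥ v)
      = starRingEnd ℂ q₁ + starRingEnd ℂ q₂ := by
    rw [Matrix.add_mulVec, dotProduct_add,
      dot_conj_transfer _ hA τ w v (star_e_sub c d) (star_e_sub a b),
      dot_conj_transfer _ hB τ w v (star_e_sub c d) (star_e_sub a b)]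
  constructor
  · have hval : (1 / 2 : ℂ) *
          (Sum.elim w (0 : Fin n → ℂ) ⬝ᵥ
            ((U (s • (1 : Matrix (Fin n ⊕ Fin n) (Fin n ⊕ Fin n) ℂ)
                  - Matrix.fromBlocks (G.adjMatrix ℂ) (H.adjMatrix ℂ)
                      (H.adjMatrix ℂ) (G.adjMatrix ℂ)) τ) *ᵥ
              Sum.elim v (0 : Fin n → ℂ)))
        = (Complex.exp (-(Complex.I * τ) * s) * 2⁻¹ * (1/2 : ℂ))
            * (starRingEnd ℂ q₁ + starRingEnd ℂ q₂) := by
      rw [U_L, dot_block_inl, hdot]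
      ring
    rw [hval, final_abs _ q₁ q₂ hzabs (dot_U_bound _ hA τ hab hcd) (dot_U_bound _ hB τ hab hcd)]
  · have hval : (1 / 2 : ℂ) *
          (Sum.elim (0 : Fin n → ℂ) w ⬝ᵥ
            ((U (s • (1 : Matrix (Fin n ⊕ Fin n) (Fin n ⊕ Fin n) ℂ)
                  - Matrix.fromBlocks (G.adjMatrix ℂ) (H.adjMatrix ℂ)
                      (H.adjMatrix ℂ) (G.adjMatrix ℂ)) τ) *ᵥ
              Sum.elim (0 : Fin n → ℂ) v))
        = (Complex.exp (-(Complex.I * τ) * s) * 2⁻¹ * (1/2 : ℂ))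
            * (starRingEnd ℂ q₁ + starRingEnd ℂ q₂) := by
      rw [U_L, dot_block_inr, hdot]
      ring
    rw [hval, final_abs _ q₁ q₂ hzabs (dot_U_bound _ hA τ hab hcd) (dot_U_bound _ hB τ hab hcd)]
end
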